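/- Inclusion of Morrey spaces in Herz–Morrey spaces: for 1 ≤ q < ∞ and λ ≥ 0, every f ∈ L^{q,λ}(ℝ^n) belongs to MK̇^{0,λ/q}_{q,q}(ℝ^n) with ‖f‖_{MK̇^{0,λ/q}_{q,q}} ≤ C ‖f‖_{L^{q,λ}} (in particular L^{q,λ}(ℝ^n) ⊂ MK̇^{0,λ}_{q,q}(ℝ^n) with the paper's normalization of indices). -/

import Mathlib

open MeasureTheory ENNReal

noncomputable section

/-- Euclidean space ℝ^n. -/
abbrev E (n : ℕ) := EuclideanSpace ℝ (Fin n)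

/-- Operator norm of an n×n real matrix w.r.t. the Euclidean norm. -/
def opNorm {n : ℕ} (A : Matrix (Fin n) (Fin n) ℝ) : ℝ :=
  ‖Matrix.toEuclideanCLM (𝕜 := ℝ) A‖

/-- Action of a matrix on a vector in Euclidean space. -/
def mApp {n : ℕ} (A : Matrix (Fin n) (Fin n) ℝ) (x : E n) : E n :=
  Matrix.toEuclideanCLM (𝕜 := ℝ) A x

/-- The axis-parallel cube centered at `x₀` with side length `r`. -/
def cube {n : ℕ} (x₀ : E n) (r : ℝ) : Set (E n) :=
  {x | ∀ i, |x i - x₀ i| ≤ r / 2}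

/-- The Morrey norm `‖f‖_{L^{p,λ}}`, valued in `ℝ≥0∞`. -/
def morreyNorm {n : ℕ} (p lam : ℝ) (f : E n → ℝ) : ℝ≥0∞ :=
  ⨆ (x₀ : E n) (r : ℝ) (_ : 0 < r),
    (ENNReal.ofReal (r ^ (-lam)) * ∫⁻ x in cube x₀ r, ENNReal.ofReal (|f x| ^ p)) ^ (1 / p)
/-- The dyadic annulus `C_k = B_k \ B_{k-1}`. -/
def annulus (n : ℕ) (k : ℤ) : Set (E n) :=
  {x | (2 : ℝ) ^ (k - 1) ≤ ‖x‖ ∧ ‖x‖ < (2 : ℝ) ^ k}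

/-- The homogeneous Herz–Morrey norm `‖f‖_{MK̇^{α,λ}_{p,q}}`, valued in `ℝ≥0∞`. -/
def herzMorreyNorm {n : ℕ} (α lam p q : ℝ) (f : E n → ℝ) : ℝ≥0∞ :=
  ⨆ k₀ : ℤ, ENNReal.ofReal ((2 : ℝ) ^ (-(k₀ : ℝ) * lam)) *
    (∑' k : ℤ, if k ≤ k₀ then
        ENNReal.ofReal ((2 : ℝ) ^ ((k : ℝ) * α * p)) *
          (eLpNorm f (ENNReal.ofReal q) (volume.restrict (annulus n k))) ^ p
      else 0) ^ (1 / p)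

lemma coord_le_norm {n : ℕ} (x : E n) (i : Fin n) : |x i| ≤ ‖x‖ := by
  rw [EuclideanSpace.norm_eq]
  have h1 : |x i| = Real.sqrt (‖x i‖ ^ 2) := by
    rw [Real.sqrt_sq_eq_abs, Real.norm_eq_abs, abs_abs]
  rw [h1]
  apply Real.sqrt_le_sqrt
  exact Finset.single_le_sum (f := fun j => ‖x j‖ ^ 2) (fun j _ => sq_nonneg _)
    (Finset.mem_univ i)

lemma annulus_measurable (n : ℕ) (k : ℤ) : MeasurableSet (annulus n k) := by
  have : annulus n k = (fun x : E n => ‖x‖) ⁻¹' Set.Ico ((2:ℝ) ^ (k-1)) ((2:ℝ) ^ k) := rfl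
  rw [this]
  exact measurable_norm measurableSet_Ico

lemma annulus_disjoint (n : ℕ) {i j : ℤ} (hij : i ≠ j) :
    Disjoint (annulus n i) (annulus n j) := by
  wlog h : i < j generalizing i j
  · exact (this hij.symm (lt_of_le_of_ne (not_lt.mp h) hij.symm)).symm
  rw [Set.disjoint_left]
  rintro x ⟨_, hxi⟩ ⟨hxj, _⟩
  have h2 : (2:ℝ) ^ i ≤ (2:ℝ) ^ (j - 1) :=
    zpow_le_zpow_right₀ one_le_two (by omega)
  linarith

theorem stmt_14 (n : ℕ) (q lam : ℝ) (hq : 1 ≤ q) (hlam : 0 ≤ lam) :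
    ∃ C > 0, ∀ f : E n → ℝ, morreyNorm q lam f < ⊤ →
      herzMorreyNorm 0 (lam / q) q q f ≤ ENNReal.ofReal C * morreyNorm q lam f := by
  have hq0 : (0:ℝ) < q := lt_of_lt_of_le one_pos hq
  refine ⟨(2:ℝ) ^ lam, Real.rpow_pos_of_pos two_pos lam, fun f _ => ?_⟩
  set M := morreyNorm q lam f with hM
  rw [herzMorreyNorm]
  refine iSup_le fun k₀ => ?_
  set r : ℝ := (2:ℝ) ^ ((k₀ : ℝ) + 1) with hr_def
  have hr : 0 < r := Real.rpow_pos_of_pos two_pos _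
  set g : E n → ℝ≥0∞ := fun x => (‖f x‖₊ : ℝ≥0∞) ^ q with hg
  set s : ℤ → Set (E n) := fun k => if k ≤ k₀ then annulus n k else ∅ with hs
  -- each summand equals the integral of g over s k
  have hterm : ∀ k : ℤ,
      (if k ≤ k₀ then
        ENNReal.ofReal ((2 : ℝ) ^ ((k : ℝ) * 0 * q)) *
          (eLpNorm f (ENNReal.ofReal q) (volume.restrict (annulus n k))) ^ q
      else 0) = ∫⁻ x in s k, g x := by
    intro k
    by_cases hk : k ≤ k₀
    · simp only [hs, hk, if_true]
      rw [eLpNorm_eq_lintegral_rpow_enorm_toReal (by simpa using hq0) ENNReal.ofReal_ne_top,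
        ENNReal.toReal_ofReal hq0.le]
      simp only [mul_zero, zero_mul, Real.rpow_zero, ENNReal.ofReal_one, one_mul]
      rw [← ENNReal.rpow_mul, one_div, inv_mul_cancel₀ hq0.ne', ENNReal.rpow_one]
      rfl
    · simp [hs, hk]
  -- the union of the s k is included in the cube
  have hsub : (⋃ k : ℤ, s k) ⊆ cube (0 : E n) r := by
    rintro x hx
    obtain ⟨k, hk⟩ := Set.mem_iUnion.mp hx
    by_cases hkk : k ≤ k₀
    · simp only [hs, hkk, if_true] at hk
      intro i
      have h1 : |x i| ≤ ‖x‖ := coord_le_norm x i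
      have h2 : ‖x‖ < (2:ℝ) ^ k := hk.2
      have h3 : (2:ℝ) ^ k ≤ (2:ℝ) ^ k₀ := zpow_le_zpow_right₀ one_le_two hkk
      have h4 : (2:ℝ) ^ (k₀ : ℤ) = r / 2 := by
        rw [hr_def, Real.rpow_add two_pos, Real.rpow_one, ← Real.rpow_intCast]
        ring
      have : |x i - (0 : E n) i| = |x i| := by simp
      rw [this]
      linarith
    · simp [hs, hkk] at hk
  -- the sum equals the integral over the union
  have hms : ∀ k, MeasurableSet (s k) := by
    intro k
    by_cases hk : k ≤ k₀ <;> simp [hs, hk, annulus_measurable]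
  have hdisj : Pairwise (Function.onFun Disjoint s) := by
    intro i j hij
    by_cases hi : i ≤ k₀ <;> by_cases hj : j ≤ k₀ <;>
      simp [Function.onFun, hs, hi, hj, annulus_disjoint n hij]
  have hsum : (∑' k : ℤ, ∫⁻ x in s k, g x) = ∫⁻ x in ⋃ k, s k, g x :=
    (lintegral_iUnion hms hdisj g).symm
  -- bound the sum by the integral over the cube
  have hgI : ∀ x, g x = ENNReal.ofReal (|f x| ^ q) := by
    intro x
    simp only [hg]
    show ‖f x‖ₑ ^ q = _
    rw [Real.enorm_eq_ofReal_abs, ENNReal.ofReal_rpow_of_nonneg (abs_nonneg _) hq0.le]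
  have hIle : (∑' k : ℤ, ∫⁻ x in s k, g x) ≤
      ∫⁻ x in cube (0 : E n) r, ENNReal.ofReal (|f x| ^ q) := by
    rw [hsum]
    calc ∫⁻ x in ⋃ k, s k, g x ≤ ∫⁻ x in cube (0 : E n) r, g x := lintegral_mono_set hsub
      _ = _ := by simp_rw [hgI]
  -- Morrey bound
  set I : ℝ≥0∞ := ∫⁻ x in cube (0 : E n) r, ENNReal.ofReal (|f x| ^ q) with hI
  set a : ℝ≥0∞ := ENNReal.ofReal (r ^ (-lam)) with ha
  have ha0 : a ≠ 0 := by
    exact (ENNReal.ofReal_pos.mpr (Real.rpow_pos_of_pos hr _)).ne'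
  have hatop : a ≠ ⊤ := ENNReal.ofReal_ne_top
  have hMorrey : (a * I) ^ (1 / q) ≤ M := by
    rw [hM, morreyNorm]
    exact le_iSup_of_le 0 (le_iSup_of_le r (le_iSup_of_le hr le_rfl))
  have h1 : a * I ≤ M ^ q := by
    have := ENNReal.rpow_le_rpow hMorrey hq0.le
    rwa [← ENNReal.rpow_mul, one_div, inv_mul_cancel₀ hq0.ne', ENNReal.rpow_one] at this
  have h2 : I ≤ a⁻¹ * M ^ q := by
    rw [← one_mul I, ← ENNReal.inv_mul_cancel ha0 hatop, mul_assoc]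
    exact mul_le_mul_right h1 _
  have hainv : a⁻¹ = ENNReal.ofReal (r ^ lam) := by
    rw [ha, ← ENNReal.ofReal_inv_of_pos (Real.rpow_pos_of_pos hr _), Real.rpow_neg hr.le, inv_inv]
  -- put everything together
  calc ENNReal.ofReal ((2 : ℝ) ^ (-(k₀ : ℝ) * (lam / q))) *
      (∑' k : ℤ, if k ≤ k₀ then
        ENNReal.ofReal ((2 : ℝ) ^ ((k : ℝ) * 0 * q)) *
          (eLpNorm f (ENNReal.ofReal q) (volume.restrict (annulus n k))) ^ q
      else 0) ^ (1 / q)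
      = ENNReal.ofReal ((2 : ℝ) ^ (-(k₀ : ℝ) * (lam / q))) *
        (∑' k : ℤ, ∫⁻ x in s k, g x) ^ (1 / q) := by
        congr 1
        exact congrArg (· ^ (1 / q)) (tsum_congr hterm)
    _ ≤ ENNReal.ofReal ((2 : ℝ) ^ (-(k₀ : ℝ) * (lam / q))) * (a⁻¹ * M ^ q) ^ (1 / q) := by
        gcongr
        exact hIle.trans h2
    _ = ENNReal.ofReal ((2 : ℝ) ^ (-(k₀ : ℝ) * (lam / q))) *
        (ENNReal.ofReal (r ^ (lam / q)) * M) := by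
        rw [hainv, ENNReal.mul_rpow_of_nonneg _ _ (by positivity), ← ENNReal.rpow_mul,
          mul_one_div, div_self hq0.ne', ENNReal.rpow_one,
          ENNReal.ofReal_rpow_of_pos (Real.rpow_pos_of_pos hr _),
          ← Real.rpow_mul hr.le, mul_one_div]
    _ = ENNReal.ofReal ((2 : ℝ) ^ (lam / q)) * M := by
        rw [← mul_assoc, ← ENNReal.ofReal_mul (by positivity)]
        congr 2
        rw [hr_def, ← Real.rpow_mul two_pos.le, ← Real.rpow_add two_pos]
        congr 1
        field_simp
        ring
    _ ≤ ENNReal.ofReal ((2 : ℝ) ^ lam) * M := by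
        exact mul_le_mul_left (ENNReal.ofReal_le_ofReal
          (Real.rpow_le_rpow_of_exponent_le one_le_two (div_le_self hlam hq))) M
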